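/- The invariant ring of the 2-dimensional orthogonal group O_2^+(F_q) acting on F_q[x,y] (the group generated by the swap σ: x↔y and the scalings τ_a: x↦a^{-1}x, y↦ay for a ∈ F_q^×) equals the polynomial subalgebra F_q[xy, x^{q-1}+y^{q-1}]. -/

import Mathlib

open MvPolynomial Finsupp

lemma fin2_finsupp (d : Fin 2 →₀ ℕ) :
    d = Finsupp.single 0 (d 0) + Finsupp.single 1 (d 1) := by
  ext i; fin_cases i <;> simp [Finsupp.single_apply]

lemma mono2 {F : Type*} [Field F] (a b : ℕ) (r : F) :
    (monomial (Finsupp.single 0 a + Finsupp.single 1 b) r : MvPolynomial (Fin 2) F)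
      = C r * X 0 ^ a * X 1 ^ b := by
  rw [monomial_eq, Finsupp.prod_fintype _ _ (fun i => pow_zero _), Fin.prod_univ_two]
  simp [Finsupp.single_apply, mul_assoc]

noncomputable def swapd (d : Fin 2 →₀ ℕ) : Fin 2 →₀ ℕ :=
  Finsupp.single 0 (d 1) + Finsupp.single 1 (d 0)

@[simp] lemma swapd_zero (d : Fin 2 →₀ ℕ) : swapd d 0 = d 1 := by
  simp [swapd, Finsupp.single_apply]

@[simp] lemma swapd_one (d : Fin 2 →₀ ℕ) : swapd d 1 = d 0 := by
  simp [swapd, Finsupp.single_apply]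

lemma swapd_swapd (d : Fin 2 →₀ ℕ) : swapd (swapd d) = d := by
  ext i; fin_cases i <;> simp

lemma aeval_swap_monomial {F : Type*} [Field F] (u : Fin 2 →₀ ℕ) (r : F) :
    aeval (R := F) ![X 1, X 0] (monomial u r) = monomial (swapd u) r := by
  conv_lhs => rw [fin2_finsupp u, mono2]
  rw [show swapd u = Finsupp.single 0 (u 1) + Finsupp.single 1 (u 0) from rfl, mono2]
  simp only [map_mul, map_pow, aeval_X, aeval_C]
  rw [show (![X 1, X 0] : Fin 2 → MvPolynomial (Fin 2) F) 0 = X 1 from rfl,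
    show (![X 1, X 0] : Fin 2 → MvPolynomial (Fin 2) F) 1 = X 0 from rfl]
  ring_nf
  rw [algebraMap_eq]
  ring

lemma coeff_swap {F : Type*} [Field F] (f : MvPolynomial (Fin 2) F) (d : Fin 2 →₀ ℕ) :
    coeff d (aeval (R := F) ![X 1, X 0] f) = coeff (swapd d) f := by
  induction f using MvPolynomial.induction_on' with
  | monomial u r =>
      rw [aeval_swap_monomial, coeff_monomial, coeff_monomial]
      have h : swapd u = d ↔ u = swapd d :=
        ⟨fun h => by rw [← h, swapd_swapd], fun h => by rw [h, swapd_swapd]⟩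
      simp only [h]
  | add p q hp hq => rw [map_add, coeff_add, coeff_add, hp, hq]

lemma aeval_scale_monomial {F : Type*} [Field F] (b c : F) (u : Fin 2 →₀ ℕ) (r : F) :
    aeval (R := F) ![C b * X 0, C c * X 1] (monomial u r)
      = monomial u (b ^ u 0 * c ^ u 1 * r) := by
  conv_lhs => rw [fin2_finsupp u, mono2]
  conv_rhs => rw [fin2_finsupp u, mono2]
  simp only [map_mul, map_pow, aeval_X, aeval_C]
  rw [show (![C b * X 0, C c * X 1] : Fin 2 → MvPolynomial (Fin 2) F) 0 = C b * X 0 from rfl,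
    show (![C b * X 0, C c * X 1] : Fin 2 → MvPolynomial (Fin 2) F) 1 = C c * X 1 from rfl,
    algebraMap_eq]
  simp only [Finsupp.add_apply, Finsupp.single_eq_same,
    Finsupp.single_eq_of_ne (show (1:Fin 2) ≠ 0 by decide),
    Finsupp.single_eq_of_ne (show (0:Fin 2) ≠ 1 by decide), add_zero, zero_add, map_mul]
  ring

lemma coeff_scale {F : Type*} [Field F] (b c : F) (f : MvPolynomial (Fin 2) F) (d : Fin 2 →₀ ℕ) :
    coeff d (aeval (R := F) ![C b * X 0, C c * X 1] f) = b ^ d 0 * c ^ d 1 * coeff d f := by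
  induction f using MvPolynomial.induction_on' with
  | monomial u r =>
      rw [aeval_scale_monomial, coeff_monomial, coeff_monomial]
      split
      · next h => subst h; rfl
      · ring
  | add p q hp hq => rw [map_add, coeff_add, coeff_add, hp, hq]; ring


lemma powsum_mem {F : Type*} [Field F] (m : ℕ) (k : ℕ) :
    (X 0 ^ (k * m) + X 1 ^ (k * m) : MvPolynomial (Fin 2) F) ∈
      Algebra.adjoin F ({X 0 * X 1, X 0 ^ m + X 1 ^ m} : Set (MvPolynomial (Fin 2) F)) := by
  set A := Algebra.adjoin F ({X 0 * X 1, X 0 ^ m + X 1 ^ m} : Set (MvPolynomial (Fin 2) F))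
  have gen1 : (X 0 * X 1 : MvPolynomial (Fin 2) F) ∈ A :=
    Algebra.subset_adjoin (by simp)
  have gen2 : (X 0 ^ m + X 1 ^ m : MvPolynomial (Fin 2) F) ∈ A :=
    Algebra.subset_adjoin (by simp)
  have e : ∀ (p : MvPolynomial (Fin 2) F) (t : ℕ), p ^ (t * m) = (p ^ m) ^ t :=
    fun p t => by rw [mul_comm, pow_mul]
  suffices H : ∀ k, ((X 0 ^ (k * m) + X 1 ^ (k * m) : MvPolynomial (Fin 2) F) ∈ A) ∧
      ((X 0 ^ ((k+1) * m) + X 1 ^ ((k+1) * m) : MvPolynomial (Fin 2) F) ∈ A) from (H k).1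
  intro k
  induction k with
  | zero =>
      constructor
      · simp only [zero_mul, pow_zero]
        exact add_mem (one_mem A) (one_mem A)
      · simpa using gen2
  | succ n ih =>
      refine ⟨ih.2, ?_⟩
      have key : (X 0 ^ ((n+2) * m) + X 1 ^ ((n+2) * m) : MvPolynomial (Fin 2) F)
          = (X 0 ^ m + X 1 ^ m) * (X 0 ^ ((n+1) * m) + X 1 ^ ((n+1) * m))
            - (X 0 * X 1) ^ m * (X 0 ^ (n * m) + X 1 ^ (n * m)) := by
        rw [e (X 0) (n+2), e (X 1) (n+2), e (X 0) (n+1), e (X 1) (n+1), e (X 0) n, e (X 1) n,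
          mul_pow]
        ring
      rw [key]
      exact sub_mem (mul_mem gen2 ih.2) (mul_mem (pow_mem gen1 m) ih.1)

lemma pair_mem {F : Type*} [Field F] (m i k : ℕ) :
    (X 0 ^ i * X 1 ^ (i + k * m) + X 0 ^ (i + k * m) * X 1 ^ i : MvPolynomial (Fin 2) F) ∈
      Algebra.adjoin F ({X 0 * X 1, X 0 ^ m + X 1 ^ m} : Set (MvPolynomial (Fin 2) F)) := by
  have key : (X 0 ^ i * X 1 ^ (i + k * m) + X 0 ^ (i + k * m) * X 1 ^ i : MvPolynomial (Fin 2) F)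
      = (X 0 * X 1) ^ i * (X 0 ^ (k * m) + X 1 ^ (k * m)) := by
    rw [pow_add, pow_add, mul_pow]; ring
  rw [key]
  exact mul_mem (pow_mem (Algebra.subset_adjoin (by simp)) i) (powsum_mem m k)

lemma backward_aux {F : Type*} [Field F] [Fintype F]
    (φ : Fin 2 → MvPolynomial (Fin 2) F)
    (h1 : aeval (R := F) φ (X 0 * X 1) = X 0 * X 1)
    (h2 : aeval (R := F) φ (X 0 ^ (Fintype.card F - 1) + X 1 ^ (Fintype.card F - 1))
        = X 0 ^ (Fintype.card F - 1) + X 1 ^ (Fintype.card F - 1))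
    (f : MvPolynomial (Fin 2) F)
    (hf : f ∈ Algebra.adjoin F
      ({X 0 * X 1, X 0 ^ (Fintype.card F - 1) + X 1 ^ (Fintype.card F - 1)} :
        Set (MvPolynomial (Fin 2) F))) :
    aeval (R := F) φ f = f := by
  have : f ∈ AlgHom.equalizer (aeval (R := F) φ) (AlgHom.id F (MvPolynomial (Fin 2) F)) := by
    apply Algebra.adjoin_le _ hf
    rintro p hp
    rcases hp with rfl | rfl
    · exact h1
    · exact h2
  exact this

lemma forward_aux {F : Type*} [Field F] [Fintype F] [DecidableEq F] :
    ∀ (n : ℕ) (f : MvPolynomial (Fin 2) F), f.support.card ≤ n →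
      aeval (R := F) ![X 1, X 0] f = f →
      (∀ a : Fˣ, aeval (R := F) ![C ((a : F)⁻¹) * X 0, C ((a : F)) * X 1] f = f) →
      f ∈ Algebra.adjoin F
        ({X 0 * X 1, X 0 ^ (Fintype.card F - 1) + X 1 ^ (Fintype.card F - 1)} :
          Set (MvPolynomial (Fin 2) F)) := by
  intro n
  induction n with
  | zero =>
      intro f hcard _ _
      have : f = 0 := by
        rwa [Nat.le_zero, Finset.card_eq_zero, MvPolynomial.support_eq_empty] at hcard
      rw [this]; exact zero_mem _
  | succ n ih =>
      intro f hcard hσ hτ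
      set m := Fintype.card F - 1 with hm
      set A := Algebra.adjoin F
        ({X 0 * X 1, X 0 ^ m + X 1 ^ m} : Set (MvPolynomial (Fin 2) F)) with hA
      by_cases h0 : f = 0
      · rw [h0]; exact zero_mem A
      have hsym : ∀ e, coeff (swapd e) f = coeff e f := by
        intro e
        conv_rhs => rw [← hσ, coeff_swap]
      have hunit : ∀ e ∈ f.support, ∀ a : Fˣ,
          ((a : F))⁻¹ ^ (e 0) * (a : F) ^ (e 1) = 1 := by
        intro e he a
        have hc : coeff e f ≠ 0 := MvPolynomial.mem_support_iff.mp he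
        have h1 : ((a : F))⁻¹ ^ (e 0) * (a : F) ^ (e 1) * coeff e f = coeff e f := by
          conv_rhs => rw [← hτ a, coeff_scale]
        exact mul_right_cancel₀ hc (by rw [h1, one_mul])
      obtain ⟨d, hd⟩ : f.support.Nonempty :=
        Finset.nonempty_iff_ne_empty.mpr (fun h => h0 (MvPolynomial.support_eq_empty.mp h))
      set d₀ : Fin 2 →₀ ℕ := if d 0 ≤ d 1 then d else swapd d with hd₀
      have hd₀mem : d₀ ∈ f.support := by
        rw [hd₀]; split
        · exact hd
        · rw [MvPolynomial.mem_support_iff, hsym d]; exact MvPolynomial.mem_support_iff.mp hd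
      have hij : d₀ 0 ≤ d₀ 1 := by
        rw [hd₀]; split
        · assumption
        · simp only [swapd_zero, swapd_one]; omega
      have hpow : ∀ a : Fˣ, (a : F) ^ (d₀ 1 - d₀ 0) = 1 := by
        intro a
        have h1 := hunit d₀ hd₀mem a
        rw [inv_pow] at h1
        have hne : (a : F) ^ (d₀ 0) ≠ 0 := pow_ne_zero _ (Units.ne_zero a)
        have h2 : (a : F) ^ (d₀ 0) = (a : F) ^ (d₀ 1) := (inv_mul_eq_one₀ hne).mp h1
        have h3 : (a : F) ^ (d₀ 1 - d₀ 0) * (a : F) ^ (d₀ 0) = 1 * (a : F) ^ (d₀ 0) := by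
          rw [one_mul, ← pow_add, Nat.sub_add_cancel hij, ← h2]
        exact mul_right_cancel₀ hne h3
      have hdvd : m ∣ (d₀ 1 - d₀ 0) := by
        obtain ⟨u, hu⟩ := IsCyclic.exists_generator (α := Fˣ)
        have hord : orderOf u = m := by
          rw [orderOf_eq_card_of_forall_mem_zpowers hu, Nat.card_eq_fintype_card,
            Fintype.card_units, hm]
        rw [← hord]
        apply orderOf_dvd_of_pow_eq_one
        apply Units.ext
        rw [Units.val_pow_eq_pow_val, Units.val_one]
        exact hpow u
      obtain ⟨k, hk⟩ := hdvd
      have hj : d₀ 1 = d₀ 0 + k * m := by rw [mul_comm]; omega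
      have hd' : d₀ = Finsupp.single 0 (d₀ 0) + Finsupp.single 1 (d₀ 1) := fin2_finsupp d₀
      have hswapd' : swapd d₀ = Finsupp.single 0 (d₀ 1) + Finsupp.single 1 (d₀ 0) := rfl
      set c := coeff d₀ f with hc
      have gen1 : (X 0 * X 1 : MvPolynomial (Fin 2) F) ∈ A := Algebra.subset_adjoin (by simp)
      have genC : ∀ r : F, (C r : MvPolynomial (Fin 2) F) ∈ A := by
        intro r; rw [show (C r : MvPolynomial (Fin 2) F) = algebraMap F _ r from rfl]
        exact Subalgebra.algebraMap_mem A r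
      have finish : ∀ g : MvPolynomial (Fin 2) F, g ∈ A →
          aeval (R := F) ![X 1, X 0] g = g →
          (∀ a : Fˣ, aeval (R := F) ![C ((a : F)⁻¹) * X 0, C ((a : F)) * X 1] g = g) →
          (f - g).support ⊆ f.support.erase d₀ → f ∈ A := by
        intro g memg hσg hτg hsupp
        have hcard' : (f - g).support.card ≤ n := by
          have h1 := Finset.card_le_card hsupp
          rw [Finset.card_erase_of_mem hd₀mem] at h1
          omega
        have hfg : f - g ∈ A :=
          ih (f - g) hcard' (by rw [map_sub, hσ, hσg])
            (fun a => by rw [map_sub, hτ a, hτg a])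
        have hfe : f = (f - g) + g := by ring
        rw [hfe]; exact add_mem hfg memg
      have hm1 : (monomial d₀ c : MvPolynomial (Fin 2) F)
          = C c * X 0 ^ (d₀ 0) * X 1 ^ (d₀ 1) := by
        conv_lhs => rw [hd', mono2]
      have hm2 : (monomial (swapd d₀) c : MvPolynomial (Fin 2) F)
          = C c * X 0 ^ (d₀ 1) * X 1 ^ (d₀ 0) := by
        conv_lhs => rw [hswapd', mono2]
      by_cases hdiag : d₀ 0 = d₀ 1
      · -- diagonal case
        have hfix : swapd d₀ = d₀ := by
          ext t; fin_cases t <;> simp [hdiag]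
        refine finish (monomial d₀ c) ?_ ?_ ?_ ?_
        · rw [hm1, ← hdiag]
          have key : (C c * X 0 ^ (d₀ 0) * X 1 ^ (d₀ 0) : MvPolynomial (Fin 2) F)
              = C c * (X 0 * X 1) ^ (d₀ 0) := by
            rw [mul_pow]; ring
          rw [key]
          exact mul_mem (genC c) (pow_mem gen1 (d₀ 0))
        · rw [aeval_swap_monomial, hfix]
        · intro a
          rw [aeval_scale_monomial, hunit d₀ hd₀mem a, one_mul]
        · intro e he
          rw [MvPolynomial.mem_support_iff, coeff_sub] at he
          rcases eq_or_ne e d₀ with rfl | hne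
          · exfalso; apply he
            rw [coeff_monomial, if_pos rfl, ← hc, sub_self]
          · rw [Finset.mem_erase]
            refine ⟨hne, MvPolynomial.mem_support_iff.mpr ?_⟩
            rwa [coeff_monomial, if_neg (Ne.symm hne), sub_zero] at he
      · -- off-diagonal case
        have hswapne : swapd d₀ ≠ d₀ := by
          intro h
          have h0' := congrArg (fun t => t 0) h
          simp only [swapd_zero] at h0'
          exact hdiag h0'.symm
        have hswmem : swapd d₀ ∈ f.support := by
          rw [MvPolynomial.mem_support_iff, hsym d₀]; exact MvPolynomial.mem_support_iff.mp hd₀mem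
        refine finish (monomial d₀ c + monomial (swapd d₀) c) ?_ ?_ ?_ ?_
        · rw [hm1, hm2]
          have key : (C c * X 0 ^ (d₀ 0) * X 1 ^ (d₀ 1)
                + C c * X 0 ^ (d₀ 1) * X 1 ^ (d₀ 0) : MvPolynomial (Fin 2) F)
              = C c * (X 0 ^ (d₀ 0) * X 1 ^ (d₀ 0 + k * m)
                + X 0 ^ (d₀ 0 + k * m) * X 1 ^ (d₀ 0)) := by
            rw [← hj]; ring
          rw [key]
          exact mul_mem (genC c) (pair_mem m (d₀ 0) k)
        · rw [map_add, aeval_swap_monomial, aeval_swap_monomial, swapd_swapd, add_comm]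
        · intro a
          rw [map_add, aeval_scale_monomial, aeval_scale_monomial,
            hunit d₀ hd₀mem a, hunit (swapd d₀) hswmem a, one_mul]
        · intro e he
          rw [MvPolynomial.mem_support_iff, coeff_sub] at he
          rcases eq_or_ne e d₀ with rfl | hne
          · exfalso; apply he
            rw [coeff_add, coeff_monomial, if_pos rfl, coeff_monomial, if_neg hswapne,
              add_zero, ← hc, sub_self]
          · rw [Finset.mem_erase]
            refine ⟨hne, MvPolynomial.mem_support_iff.mpr ?_⟩
            rcases eq_or_ne e (swapd d₀) with rfl | hne2
            · exfalso; apply he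
              rw [coeff_add, coeff_monomial, if_neg (fun h => hswapne h.symm),
                coeff_monomial, if_pos rfl, zero_add, hsym d₀, ← hc, sub_self]
            · intro hh
              apply he
              rw [coeff_add, coeff_monomial, if_neg (Ne.symm hne), coeff_monomial,
                if_neg (Ne.symm hne2), add_zero, sub_zero]
              exact hh

/-- Over a finite field of characteristic 2 (`q = 2^s`, `s ≥ 2`), a polynomial
`f ∈ F_q[x,y]` is invariant under `O₂⁺(F_q)` (the group generated by the swap
`σ : x ↔ y` and the scalings `τ_a : x ↦ a⁻¹x, y ↦ ay`, `a ∈ F_q^×`) if and only if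
`f` lies in the subalgebra `F_q[xy, x^{q-1} + y^{q-1}]`.  Here `x = X 0`, `y = X 1`. -/
theorem invariant_ring_one_vector (F : Type*) [Field F] [Fintype F] [DecidableEq F]
    (hchar : ringChar F = 2) (h4 : 4 ≤ Fintype.card F) (f : MvPolynomial (Fin 2) F) :
    (aeval (R := F) ![X 1, X 0] f = f ∧
        ∀ a : Fˣ, aeval (R := F) ![C ((a : F)⁻¹) * X 0, C ((a : F)) * X 1] f = f) ↔
      f ∈ Algebra.adjoin F
        ({X 0 * X 1,
          X 0 ^ (Fintype.card F - 1) + X 1 ^ (Fintype.card F - 1)} :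
            Set (MvPolynomial (Fin 2) F)) := by
  constructor
  · rintro ⟨hσ, hτ⟩
    exact forward_aux f.support.card f le_rfl hσ hτ
  · intro hf
    constructor
    · apply backward_aux _ ?_ ?_ f hf
      · simp only [map_mul, aeval_X, Matrix.cons_val_zero, Matrix.cons_val_one,
          Matrix.head_cons]
        ring
      · simp only [map_add, map_pow, aeval_X, Matrix.cons_val_zero, Matrix.cons_val_one,
          Matrix.head_cons]
        ring
    · intro a
      have ha : (a : F) ^ (Fintype.card F - 1) = 1 :=
        FiniteField.pow_card_sub_one_eq_one _ (Units.ne_zero a)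
      have hai : ((a : F)⁻¹) ^ (Fintype.card F - 1) = 1 := by rw [inv_pow, ha, inv_one]
      apply backward_aux _ ?_ ?_ f hf
      · simp only [map_mul, aeval_X, Matrix.cons_val_zero, Matrix.cons_val_one,
          Matrix.head_cons]
        have h1 : ((a : F))⁻¹ * (a : F) = 1 := inv_mul_cancel₀ (Units.ne_zero a)
        calc (C ((a : F)⁻¹) * X 0 * (C ((a : F)) * X 1) : MvPolynomial (Fin 2) F)
            = C ((a : F)⁻¹ * (a : F)) * (X 0 * X 1) := by rw [map_mul]; ring
          _ = X 0 * X 1 := by rw [h1, map_one, one_mul]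
      · simp only [map_add, map_pow, aeval_X, Matrix.cons_val_zero, Matrix.cons_val_one,
          Matrix.head_cons]
        rw [mul_pow, mul_pow, ← C_pow, ← C_pow, hai, ha, C_1, one_mul, one_mul]
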